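/- arXiv:1404.6635 — 3 statements merged into one kernel-verified Lean document; each statement's English description precedes it below -/
import Mathlib

section
/- Let P be symmetric positive definite with block decomposition indexed by a partition Π = {π₁,…,π_m}, let x_opt = P⁻¹q, and for a block π let the BCD update be x' = x + 𝕀_πᵀ (P_{ππ})⁻¹ (q_π - P_π x), where P_π denotes the rows of P indexed by π, 𝕀_π the corresponding rows of the identity, and P_{ππ} = P_π 𝕀_πᵀ. Then ‖x' - x_opt‖_P² = ‖x - x_opt‖_P² - β_π(x), where β_π(x) = (P_π x - q_π)ᵀ (P_{ππ})⁻¹ (P_π x - q_π). -/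
open Matrix

/-- For the BCD update `x' = x + 𝕀_πᵀ (P_{ππ})⁻¹ (q_π - P_π x)` one has
`‖x' - x_opt‖_P² = ‖x - x_opt‖_P² - β_π(x)` where
`β_π(x) = (P_π x - q_π)ᵀ (P_{ππ})⁻¹ (P_π x - q_π)`. -/
theorem stmt_3 {n : ℕ} (P : Matrix (Fin n) (Fin n) ℝ) (hP : P.PosDef)
    (q : Fin n → ℝ) (π : Finset (Fin n)) (x xopt : Fin n → ℝ)
    (hxopt : xopt = P⁻¹ *ᵥ q)
    (Pπ : Matrix {a // a ∈ π} (Fin n) ℝ)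
    (hPπ : Pπ = P.submatrix (fun a : {a // a ∈ π} => (a : Fin n)) id)
    (Iπ : Matrix {a // a ∈ π} (Fin n) ℝ)
    (hIπ : Iπ = (1 : Matrix (Fin n) (Fin n) ℝ).submatrix (fun a : {a // a ∈ π} => (a : Fin n)) id)
    (Pππ : Matrix {a // a ∈ π} {a // a ∈ π} ℝ) (hPππ : Pππ = Pπ * Iπᵀ)
    (qπ : {a // a ∈ π} → ℝ) (hqπ : qπ = fun a => q a.1)
    (x' : Fin n → ℝ)
    (hx' : x' = x + Iπᵀ *ᵥ (Pππ⁻¹ *ᵥ (qπ - Pπ *ᵥ x))) :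
    (x' - xopt) ⬝ᵥ (P *ᵥ (x' - xopt)) =
      (x - xopt) ⬝ᵥ (P *ᵥ (x - xopt))
        - (Pπ *ᵥ x - qπ) ⬝ᵥ (Pππ⁻¹ *ᵥ (Pπ *ᵥ x - qπ)) := by
  have hPs : ∀ i j, P i j = P j i := fun i j => hP.isHermitian.apply j i ▸ rfl
  -- Iπ * P = Pπ
  have h1 : Iπ * P = Pπ := by
    rw [hIπ, hPπ]
    ext a j
    simp [Matrix.mul_apply, Matrix.one_apply, Finset.sum_ite_eq]
  -- Pππ entries
  have h2 : Pππ = P.submatrix (fun a : {a // a ∈ π} => (a : Fin n))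
      (fun a : {a // a ∈ π} => (a : Fin n)) := by
    rw [hPππ, hPπ, hIπ]
    ext a b
    simp [Matrix.mul_apply, Matrix.one_apply, Finset.sum_ite_eq']
  -- z entries
  have hz : ∀ (y : {a // a ∈ π} → ℝ) (b : {a // a ∈ π}), (Iπᵀ *ᵥ y) b.val = y b := by
    intro y b
    rw [hIπ]
    simp [Matrix.mulVec, dotProduct, Matrix.one_apply, Subtype.val_inj,
      Finset.sum_ite_eq]
  -- Pππ is PosDef
  have hd : Pππ.PosDef := by
    refine Matrix.PosDef.of_dotProduct_mulVec_pos ?_ ?_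
    · ext a b
      simp [h2, Matrix.conjTranspose_apply]
      exact hPs b.val a.val
    · intro y hy
      set z := Iπᵀ *ᵥ y with hzdef
      have hzne : z ≠ 0 := by
        obtain ⟨b, hb⟩ := Function.ne_iff.mp hy
        intro h
        apply hb
        rw [← hz y b, ← hzdef, h]
        rfl
      have key : star y ⬝ᵥ (Pππ *ᵥ y) = star z ⬝ᵥ (P *ᵥ z) := by
        simp only [star_trivial]
        rw [hPππ, ← Matrix.mulVec_mulVec, ← hzdef, ← h1, ← Matrix.mulVec_mulVec,
          Matrix.dotProduct_mulVec, ← Matrix.mulVec_transpose, ← hzdef]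
      rw [key]
      exact hP.dotProduct_mulVec_pos hzne
  have hdet : IsUnit Pππ.det := isUnit_iff_ne_zero.mpr (ne_of_gt hd.det_pos)
  have hmulinv : Pππ * Pππ⁻¹ = 1 := Matrix.mul_nonsing_inv _ hdet
  -- symmetry of Pππ and its inverse
  have hPππsym : Pππᵀ = Pππ := by
    ext a b; simp [h2]; exact hPs b.val a.val
  -- P xopt = q
  have hq : P *ᵥ xopt = q := by
    rw [hxopt, Matrix.mulVec_mulVec, Matrix.mul_nonsing_inv _ (isUnit_iff_ne_zero.mpr hP.det_pos.ne'), Matrix.one_mulVec]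
  have hqpi : Pπ *ᵥ xopt = qπ := by
    funext a
    rw [hPπ, hqπ]
    calc (P.submatrix (fun a : {a // a ∈ π} => (a : Fin n)) id *ᵥ xopt) a
        = (P *ᵥ xopt) a.val := by simp [Matrix.mulVec, dotProduct]
      _ = q a.val := by rw [hq]
  set e : Fin n → ℝ := x - xopt with he
  set g : {a // a ∈ π} → ℝ := Pπ *ᵥ x - qπ with hg
  have hge : Pπ *ᵥ e = g := by rw [he, hg, Matrix.mulVec_sub, hqpi]
  set A := Pππ⁻¹ with hA
  set w : {a // a ∈ π} → ℝ := A *ᵥ g with hw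
  set u : Fin n → ℝ := Iπᵀ *ᵥ w with hu
  have hx'e : x' - xopt = e - u := by
    rw [hx', hu, hw, hA]
    have h3 : qπ - Pπ *ᵥ x = -g := by rw [hg]; abel
    rw [h3, Matrix.mulVec_neg, Matrix.mulVec_neg]
    show x + -(Iπᵀ *ᵥ (Pππ⁻¹ *ᵥ g)) - xopt = (x - xopt) - Iπᵀ *ᵥ (Pππ⁻¹ *ᵥ g)
    abel
  -- key: u ⬝ᵥ (P *ᵥ v) = w ⬝ᵥ (Pπ *ᵥ v)
  have K1 : ∀ v, u ⬝ᵥ (P *ᵥ v) = w ⬝ᵥ (Pπ *ᵥ v) := by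
    intro v
    rw [hu, Matrix.mulVec_transpose, ← Matrix.dotProduct_mulVec, Matrix.mulVec_mulVec, h1]
  -- symmetry of P in dot products
  have Psym : ∀ a b, a ⬝ᵥ (P *ᵥ b) = b ⬝ᵥ (P *ᵥ a) := by
    intro a b
    rw [Matrix.dotProduct_mulVec, dotProduct_comm, ← Matrix.mulVec_transpose]
    have : Pᵀ = P := by ext i j; exact hPs j i
    rw [this]
  have hePu : e ⬝ᵥ (P *ᵥ u) = w ⬝ᵥ g := by rw [Psym, K1, hge]
  have huPe : u ⬝ᵥ (P *ᵥ e) = w ⬝ᵥ g := by rw [K1, hge]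
  have huPu : u ⬝ᵥ (P *ᵥ u) = w ⬝ᵥ g := by
    rw [K1, hu, Matrix.mulVec_mulVec, ← hPππ, hw, Matrix.mulVec_mulVec, hmulinv,
      Matrix.one_mulVec]
  rw [hx'e]
  have expand : (e - u) ⬝ᵥ (P *ᵥ (e - u)) =
      e ⬝ᵥ (P *ᵥ e) - e ⬝ᵥ (P *ᵥ u) - u ⬝ᵥ (P *ᵥ e) + u ⬝ᵥ (P *ᵥ u) := by
    simp only [Matrix.mulVec_sub, sub_dotProduct, dotProduct_sub]
    ring
  rw [expand, hePu, huPe, huPu, show g ⬝ᵥ w = w ⬝ᵥ g from dotProduct_comm g w]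
  ring
end

section
/- The block coordinate descent update never increases the P-distance to the optimum: for x' = x + 𝕀_πᵀ (P_{ππ})⁻¹ (q_π - P_π x) and x_opt = P⁻¹q, one has ‖x' - x_opt‖_P ≤ ‖x - x_opt‖_P. -/
open Matrix

/-- Helper: moving a transposed matrix across a dot product. -/
lemma stmt_5_aux {m k : Type*} [Fintype m] [Fintype k] (M : Matrix m k ℝ)
    (a : m → ℝ) (b : k → ℝ) : (Mᵀ *ᵥ a) ⬝ᵥ b = a ⬝ᵥ (M *ᵥ b) := by
  rw [Matrix.mulVec_transpose, ← Matrix.dotProduct_mulVec]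

/-- The BCD update never increases the `P`-distance to the optimum:
`‖x' - x_opt‖_P ≤ ‖x - x_opt‖_P`. -/
theorem stmt_5 {n : ℕ} (P : Matrix (Fin n) (Fin n) ℝ) (hP : P.PosDef)
    (q : Fin n → ℝ) (π : Finset (Fin n)) (x xopt : Fin n → ℝ)
    (hxopt : xopt = P⁻¹ *ᵥ q)
    (Pπ : Matrix {a // a ∈ π} (Fin n) ℝ)
    (hPπ : Pπ = P.submatrix (fun a : {a // a ∈ π} => (a : Fin n)) id)
    (Iπ : Matrix {a // a ∈ π} (Fin n) ℝ)
    (hIπ : Iπ = (1 : Matrix (Fin n) (Fin n) ℝ).submatrix (fun a : {a // a ∈ π} => (a : Fin n)) id)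
    (Pππ : Matrix {a // a ∈ π} {a // a ∈ π} ℝ) (hPππ : Pππ = Pπ * Iπᵀ)
    (qπ : {a // a ∈ π} → ℝ) (hqπ : qπ = fun a => q a.1)
    (x' : Fin n → ℝ)
    (hx' : x' = x + Iπᵀ *ᵥ (Pππ⁻¹ *ᵥ (qπ - Pπ *ᵥ x))) :
    Real.sqrt ((x' - xopt) ⬝ᵥ (P *ᵥ (x' - xopt))) ≤
      Real.sqrt ((x - xopt) ⬝ᵥ (P *ᵥ (x - xopt))) := by
  have hPdet : IsUnit P.det := hP.det_pos.ne'.isUnit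
  have hPt : Pᵀ = P := (by simpa using hP.isHermitian : P.IsSymm)
  -- P *ᵥ xopt = q
  have hPx : P *ᵥ xopt = q := by
    rw [hxopt, Matrix.mulVec_mulVec, Matrix.mul_nonsing_inv P hPdet, Matrix.one_mulVec]
  -- Pπ = Iπ * P
  have hPπ' : Pπ = Iπ * P := by
    rw [hPπ, hIπ, ← Matrix.submatrix_id_id P,
      ← Matrix.submatrix_mul _ _ _ id _ Function.bijective_id, Matrix.one_mul,
      Matrix.submatrix_id_id]
  -- evaluation of Iπᵀ *ᵥ ·
  have hIval : ∀ (u : {a // a ∈ π} → ℝ) (b : {a // a ∈ π}), (Iπᵀ *ᵥ u) b.1 = u b := by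
    intro u b
    simp only [hIπ, Matrix.mulVec, dotProduct, Matrix.transpose_apply,
      Matrix.submatrix_apply, id_eq, Matrix.one_apply]
    rw [Finset.sum_eq_single b]
    · simp
    · intro a _ hab
      have : ¬ ((a : Fin n) = b.1) := fun h => hab (Subtype.ext h)
      simp [this]
    · simp
  have hInj : ∀ u : {a // a ∈ π} → ℝ, u ≠ 0 → Iπᵀ *ᵥ u ≠ 0 := by
    intro u hu hcontra
    apply hu
    funext b
    have := hIval u b
    rw [hcontra] at this
    simpa using this.symm
  -- Pππ = Iπ * P * Iπᵀ
  have hPππ' : Pππ = Iπ * P * Iπᵀ := by rw [hPππ, hPπ']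
  -- Pππ is positive definite
  have hPππd : Pππ.PosDef := by
    refine Matrix.PosDef.of_dotProduct_mulVec_pos ?_ ?_
    · have : Pππ = P.submatrix (fun a : {a // a ∈ π} => (a : Fin n))
          (fun a : {a // a ∈ π} => (a : Fin n)) := by
        rw [hPππ, hPπ, hIπ]
        ext a b
        simp [Matrix.mul_apply, Matrix.one_apply, Finset.sum_ite_eq']
      rw [this]
      exact hP.isHermitian.submatrix _
    · intro u hu
      have key : dotProduct (star u) (Pππ *ᵥ u)
          = dotProduct (star (Iπᵀ *ᵥ u)) (P *ᵥ (Iπᵀ *ᵥ u)) := by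
        simp only [star_trivial, hPππ']
        rw [Matrix.mul_assoc, ← Matrix.mulVec_mulVec, ← Matrix.mulVec_mulVec,
          ← stmt_5_aux Iπ]
      rw [key]
      exact hP.dotProduct_mulVec_pos (hInj u hu)
  have hPππdet : IsUnit Pππ.det := hPππd.det_pos.ne'.isUnit
  -- abbreviations
  set e : Fin n → ℝ := x - xopt with he
  set v : {a // a ∈ π} → ℝ := Pπ *ᵥ e with hv
  set u : {a // a ∈ π} → ℝ := Pππ⁻¹ *ᵥ v with hu
  -- qπ = Pπ *ᵥ xopt
  have hqπ' : qπ = Pπ *ᵥ xopt := by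
    rw [hqπ, hPπ', ← Matrix.mulVec_mulVec, hPx, hIπ]
    funext a
    simp only [Matrix.mulVec, dotProduct, Matrix.submatrix_apply, id_eq,
      Matrix.one_apply]
    rw [Finset.sum_eq_single (a : Fin n)]
    · simp
    · intro b _ hb
      rw [if_neg (fun h => hb h.symm), zero_mul]
    · simp
  -- x' - xopt = e - Iπᵀ *ᵥ u
  have hdiff : x' - xopt = e - Iπᵀ *ᵥ u := by
    rw [hx', hqπ', hu, hv, he]
    have : Pπ *ᵥ xopt - Pπ *ᵥ x = -(Pπ *ᵥ (x - xopt)) := by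
      rw [Matrix.mulVec_sub]; abel
    rw [this, Matrix.mulVec_neg, Matrix.mulVec_neg]
    funext i; simp; abel
  -- Pππ *ᵥ u = v
  have hPu : Pππ *ᵥ u = v := by
    rw [hu, Matrix.mulVec_mulVec, Matrix.mul_nonsing_inv Pππ hPππdet, Matrix.one_mulVec]
  -- cross terms
  have hcross1 : (Iπᵀ *ᵥ u) ⬝ᵥ (P *ᵥ e) = u ⬝ᵥ v := by
    rw [stmt_5_aux, Matrix.mulVec_mulVec, ← hPπ', ← hv]
  have hsym : ∀ y z : Fin n → ℝ, y ⬝ᵥ (P *ᵥ z) = z ⬝ᵥ (P *ᵥ y) := by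
    intro y z
    rw [← stmt_5_aux P z y, hPt]
    exact dotProduct_comm _ _
  have hcross2 : e ⬝ᵥ (P *ᵥ (Iπᵀ *ᵥ u)) = u ⬝ᵥ v := by
    rw [hsym]; exact hcross1
  have hquad : (Iπᵀ *ᵥ u) ⬝ᵥ (P *ᵥ (Iπᵀ *ᵥ u)) = u ⬝ᵥ v := by
    rw [stmt_5_aux, Matrix.mulVec_mulVec, Matrix.mulVec_mulVec, ← hPππ', hPu]
  -- nonnegativity of u ⬝ᵥ v
  have hnn : 0 ≤ u ⬝ᵥ v := by
    have hinv := hPππd.inv.posSemidef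
    have := hinv.dotProduct_mulVec_nonneg v
    simp only [star_trivial] at this
    rwa [hu, dotProduct_comm]
  -- main inequality on quadratic forms
  apply Real.sqrt_le_sqrt
  rw [hdiff]
  have expand : (e - Iπᵀ *ᵥ u) ⬝ᵥ (P *ᵥ (e - Iπᵀ *ᵥ u)) = e ⬝ᵥ (P *ᵥ e) - u ⬝ᵥ v := by
    rw [Matrix.mulVec_sub, sub_dotProduct, dotProduct_sub,
      dotProduct_sub, hcross1, hcross2, hquad]
    ring
  rw [expand]
  linarith
end

section
/- Let P be symmetric positive definite with partition Π = {π₁,…,π_m} of {1,…,n}. For x ≠ x_opt = P⁻¹q, let π be a block maximizing β_π(x) = ∇_π f(x)ᵀ (P_{ππ})⁻¹ ∇_π f(x), and x' = x + 𝕀_πᵀ (P_{ππ})⁻¹ (q_π - P_π x) the greedy BCD update. Then ‖x' - x_opt‖_P² / ‖x - x_opt‖_P² ≤ 1 - (1/m) λ_min(P_Π B_Π⁻¹), where P_Π is the symmetric rearrangement of P induced by Π and B_Π is the block diagonal matrix of the blocks P_{π_i π_i}. -/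
open Matrix

open Pointwise


-- symmetric dot product helper
lemma dot_symm {ι : Type*} [Fintype ι] (M : Matrix ι ι ℝ) (hM : Mᵀ = M) (a b : ι → ℝ) :
    a ⬝ᵥ (M *ᵥ b) = (M *ᵥ a) ⬝ᵥ b := by
  rw [Matrix.dotProduct_mulVec, ← Matrix.mulVec_transpose, hM]

-- Rayleigh lower bound from spectrum lower bound
lemma rayleigh_lower {ι : Type*} [Fintype ι] [DecidableEq ι] (D : Matrix ι ι ℝ)
    (hD : D.IsHermitian) (μ : ℝ) (h : ∀ ν ∈ spectrum ℝ D, μ ≤ ν) (u : ι → ℝ) :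
    μ * (u ⬝ᵥ u) ≤ u ⬝ᵥ (D *ᵥ u) := by
  have hH : (D - μ • 1).IsHermitian := by
    apply hD.sub
    simp [Matrix.IsHermitian, Matrix.conjTranspose_smul]
  have hspec : spectrum ℝ D - ({μ} : Set ℝ) = spectrum ℝ (D - μ • 1) := by
    have h2 := spectrum.sub_singleton_eq (R := ℝ) D μ
    rwa [Algebra.algebraMap_eq_smul_one] at h2
  have hPSD : (D - μ • 1).PosSemidef := by
    apply hH.posSemidef_iff_eigenvalues_nonneg.mpr
    intro i
    show (0 : ℝ) ≤ _
    have hmem := hH.eigenvalues_mem_spectrum_real i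
    rw [← hspec] at hmem
    obtain ⟨ν, hν, μ', hμ', hEq⟩ := Set.mem_sub.mp hmem
    rw [Set.mem_singleton_iff] at hμ'
    subst hμ'
    linarith [h ν hν]
  have := hPSD.dotProduct_mulVec_nonneg u
  simp only [star_trivial, RCLike.re_to_real, sub_mulVec, smul_mulVec, one_mulVec,
    dotProduct_sub, dotProduct_smul, smul_eq_mul] at this
  linarith

lemma spectrum_conj {ι : Type*} [Fintype ι] [DecidableEq ι] (S D : Matrix ι ι ℝ)
    (hS : IsUnit S) : spectrum ℝ (S * D * S⁻¹) = spectrum ℝ D := by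
  have h1 : (hS.unit : Matrix ι ι ℝ) = S := rfl
  have h2 : ((hS.unit⁻¹ : (Matrix ι ι ℝ)ˣ) : Matrix ι ι ℝ) = S⁻¹ := by
    rw [Matrix.coe_units_inv, h1]
  calc spectrum ℝ (S * D * S⁻¹)
      = spectrum ℝ (hS.unit * D * ↑hS.unit⁻¹) := by rw [h1, h2]
    _ = spectrum ℝ D := spectrum.units_conjugate

lemma posdef_submatrix {k n : Type*} [Fintype k] [Fintype n] [DecidableEq k] [DecidableEq n]
    {M : Matrix n n ℝ} (hM : M.PosDef) (e : k → n) (he : Function.Injective e) :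
    (M.submatrix e e).PosDef := by
  refine .of_dotProduct_mulVec_pos (hM.1.submatrix e) fun v hv => ?_
  set y : n → ℝ := (1 : Matrix n n ℝ).submatrix id e *ᵥ v with hy
  have hye : ∀ a, y (e a) = v a := by
    intro a
    simp only [hy, Matrix.mulVec, dotProduct, Matrix.submatrix_apply, id_eq,
      Matrix.one_apply]
    rw [Finset.sum_eq_single a]
    · simp
    · intro b _ hb
      have hne : e a ≠ e b := fun h => hb (he h.symm)
      simp [hne]
    · simp
  have hy0 : y ≠ 0 := by
    intro h0
    apply hv
    funext a
    have := congrFun h0 (e a)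
    rw [hye a] at this
    exact this
  have hMs : M.submatrix e e = ((1 : Matrix n n ℝ).submatrix id e)ᵀ * M *
      ((1 : Matrix n n ℝ).submatrix id e) := by
    ext a b
    simp [Matrix.mul_apply, Matrix.one_apply, ite_mul, mul_ite, Finset.sum_ite_eq,
      Finset.sum_ite_eq']
  have key : v ⬝ᵥ (M.submatrix e e *ᵥ v) = y ⬝ᵥ (M *ᵥ y) := by
    rw [hMs, ← Matrix.mulVec_mulVec, ← Matrix.mulVec_mulVec, Matrix.dotProduct_mulVec (w := M *ᵥ _),
      ← Matrix.mulVec_transpose, Matrix.transpose_transpose, ← hy]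
  have := hM.dotProduct_mulVec_pos hy0
  simpa [key] using this

open scoped MatrixOrder in
lemma key_spectral {ι : Type*} [Fintype ι] [DecidableEq ι] (Pm Bm : Matrix ι ι ℝ)
    (hPm : Pm.PosDef) (hBm : Bm.PosDef) (μ : ℝ)
    (hμmin : ∀ ν ∈ spectrum ℝ (Pm * Bm⁻¹), μ ≤ ν) (w : ι → ℝ) :
    μ * (w ⬝ᵥ (Pm *ᵥ w)) ≤ w ⬝ᵥ (Pm *ᵥ (Bm⁻¹ *ᵥ (Pm *ᵥ w))) := by
  set T := CFC.sqrt Pm with hTdef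
  have hT2 : T * T = Pm := CFC.sqrt_mul_sqrt_self Pm hPm.posSemidef.nonneg
  have hTH : T.IsHermitian := (CFC.sqrt_nonneg Pm).posSemidef.1
  have hTt : Tᵀ = T := by
    ext i j
    have := congrFun (congrFun hTH i) j
    simpa using this
  have hTdu : IsUnit T.det := by
    have h1 : IsUnit Pm.det := hPm.det_pos.ne'.isUnit
    rw [← hT2, Matrix.det_mul] at h1
    exact isUnit_of_mul_isUnit_left h1
  have hTu : IsUnit T := (Matrix.isUnit_iff_isUnit_det T).mpr hTdu
  have hTi1 : T * T⁻¹ = 1 := Matrix.mul_nonsing_inv T hTdu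
  set D := T * Bm⁻¹ * T with hDdef
  have hDH : D.IsHermitian := by
    have := Matrix.isHermitian_conjTranspose_mul_mul T hBm.inv.isHermitian
    rwa [hTH.eq] at this
  have hconj : Pm * Bm⁻¹ = T * D * T⁻¹ := by
    calc Pm * Bm⁻¹ = (T * T) * Bm⁻¹ * (T * T⁻¹) := by rw [hT2, hTi1, mul_one]
      _ = T * D * T⁻¹ := by rw [hDdef]; noncomm_ring
  have hs : ∀ ν ∈ spectrum ℝ D, μ ≤ ν := by
    intro ν hν
    apply hμmin
    rw [hconj, spectrum_conj T D hTu]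
    exact hν
  have hray := rayleigh_lower D hDH μ hs (T *ᵥ w)
  have hLHS : (T *ᵥ w) ⬝ᵥ (T *ᵥ w) = w ⬝ᵥ (Pm *ᵥ w) := by
    rw [dot_symm T hTt (T *ᵥ w) w, Matrix.mulVec_mulVec, hT2, dotProduct_comm]
  have hRHS : (T *ᵥ w) ⬝ᵥ (D *ᵥ (T *ᵥ w)) = w ⬝ᵥ (Pm *ᵥ (Bm⁻¹ *ᵥ (Pm *ᵥ w))) := by
    rw [Matrix.mulVec_mulVec, ← dot_symm T hTt w ((D * T) *ᵥ w), Matrix.mulVec_mulVec]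
    have : T * (D * T) = Pm * (Bm⁻¹ * Pm) := by
      rw [hDdef, ← hT2]; noncomm_ring
    rw [this, ← Matrix.mulVec_mulVec, ← Matrix.mulVec_mulVec]
  rw [hLHS, hRHS] at hray
  exact hray


set_option maxHeartbeats 1000000 in
/-- Convergence rate of the greedy BCD step:
`‖x' - x_opt‖_P² / ‖x - x_opt‖_P² ≤ 1 - (1/m) λ_min(P_Π B_Π⁻¹)`. -/
theorem stmt_9 {n m : ℕ} (hm : 0 < m)
    (P : Matrix (Fin n) (Fin n) ℝ) (hP : P.PosDef) (q : Fin n → ℝ)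
    (π : Fin m → Finset (Fin n))
    (hdisj : ∀ i j, i ≠ j → Disjoint (π i) (π j))
    (hcover : ∀ a : Fin n, ∃ i, a ∈ π i)
    (PPi BPi : Matrix (Σ i : Fin m, {a // a ∈ π i}) (Σ i : Fin m, {a // a ∈ π i}) ℝ)
    (hPPi : ∀ p p', PPi p p' = P p.2 p'.2)
    (hBPi : ∀ p p', BPi p p' = if p.1 = p'.1 then P p.2 p'.2 else 0)
    (μ : ℝ) (hμ : μ ∈ spectrum ℝ (PPi * BPi⁻¹))
    (hμmin : ∀ ν ∈ spectrum ℝ (PPi * BPi⁻¹), μ ≤ ν)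
    (x xopt : Fin n → ℝ) (hxopt : xopt = P⁻¹ *ᵥ q) (hx : x ≠ xopt)
    (β : Fin m → ℝ)
    (hβ : ∀ i, β i =
      (P.submatrix (fun a : {a // a ∈ π i} => (a : Fin n)) id *ᵥ x - fun a : {a // a ∈ π i} => q a.1)
        ⬝ᵥ ((P.submatrix (fun a : {a // a ∈ π i} => (a : Fin n)) (fun a : {a // a ∈ π i} => (a : Fin n)))⁻¹
          *ᵥ (P.submatrix (fun a : {a // a ∈ π i} => (a : Fin n)) id *ᵥ x - fun a : {a // a ∈ π i} => q a.1)))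
    (i0 : Fin m) (hi0 : ∀ i, β i ≤ β i0)
    (x' : Fin n → ℝ)
    (hx' : x' = x +
      ((1 : Matrix (Fin n) (Fin n) ℝ).submatrix (fun a : {a // a ∈ π i0} => (a : Fin n)) id)ᵀ *ᵥ
        ((P.submatrix (fun a : {a // a ∈ π i0} => (a : Fin n)) (fun a : {a // a ∈ π i0} => (a : Fin n)))⁻¹ *ᵥ
          ((fun a : {a // a ∈ π i0} => q a.1) -
            P.submatrix (fun a : {a // a ∈ π i0} => (a : Fin n)) id *ᵥ x))) :
    ((x' - xopt) ⬝ᵥ (P *ᵥ (x' - xopt))) / ((x - xopt) ⬝ᵥ (P *ᵥ (x - xopt))) ≤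
      1 - μ / m := by
  classical
  have hPdet : IsUnit P.det := hP.det_pos.ne'.isUnit
  have hPsymm : Pᵀ = P := by
    ext i j
    have := congrFun (congrFun hP.1 i) j
    simpa using this
  have hPentry : ∀ a b, P a b = P b a := by
    intro a b
    conv_lhs => rw [← hPsymm]
    rfl
  -- the sigma index bijection
  set σf : (Σ i : Fin m, {a // a ∈ π i}) → Fin n := fun p => (p.2 : Fin n) with hσf
  have hσinj : Function.Injective σf := by
    rintro ⟨i, a, ha⟩ ⟨j, b, hb⟩ h
    simp only [hσf] at h
    have hij : i = j := by
      by_contra hne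
      exact (Finset.disjoint_left.mp (hdisj i j hne)) ha (h ▸ hb)
    subst hij
    exact congrArg (Sigma.mk i) (Subtype.ext h)
  have hσsurj : Function.Surjective σf := by
    intro b
    obtain ⟨i, hi⟩ := hcover b
    exact ⟨⟨i, ⟨b, hi⟩⟩, rfl⟩
  have hσ : Function.Bijective σf := ⟨hσinj, hσsurj⟩
  -- error vector and gradient
  set e := x - xopt with he
  have he0 : e ≠ 0 := sub_ne_zero.mpr hx
  have hPq : P *ᵥ xopt = q := by
    rw [hxopt, Matrix.mulVec_mulVec, Matrix.mul_nonsing_inv P hPdet, Matrix.one_mulVec]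
  set g := P *ᵥ e with hgdef
  have hgx : ∀ b, g b = (P *ᵥ x) b - q b := by
    intro b
    rw [hgdef, he, Matrix.mulVec_sub, hPq]
    rfl
  have hDpos : 0 < e ⬝ᵥ (P *ᵥ e) := by
    have := hP.dotProduct_mulVec_pos he0
    simpa using this
  -- blocks
  set A : ∀ i : Fin m, Matrix {a // a ∈ π i} {a // a ∈ π i} ℝ :=
    fun i => P.submatrix (fun a : {a // a ∈ π i} => (a : Fin n))
      (fun a : {a // a ∈ π i} => (a : Fin n)) with hAdef
  have hA : ∀ i, (A i).PosDef := fun i =>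
    posdef_submatrix hP _ (fun a b hab => Subtype.ext hab)
  have hAdet : ∀ i, IsUnit (A i).det := fun i => (hA i).det_pos.ne'.isUnit
  set gi : ∀ i : Fin m, {a // a ∈ π i} → ℝ := fun i a => g (a : Fin n) with hgidef
  have hgi : ∀ i, (P.submatrix (fun a : {a // a ∈ π i} => (a : Fin n)) id *ᵥ x
      - fun a : {a // a ∈ π i} => q a.1) = gi i := by
    intro i
    funext a
    simp only [Pi.sub_apply, Matrix.mulVec, dotProduct, Matrix.submatrix_apply, id_eq,
      hgidef, hgx]
  have hβ' : ∀ i, β i = gi i ⬝ᵥ ((A i)⁻¹ *ᵥ gi i) := by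
    intro i
    rw [hβ i, hgi i]
  -- the update matrices
  set J : Matrix {a // a ∈ π i0} (Fin n) ℝ :=
    (1 : Matrix (Fin n) (Fin n) ℝ).submatrix (fun a : {a // a ∈ π i0} => (a : Fin n)) id
    with hJdef
  have hJr : ∀ y : Fin n → ℝ, J *ᵥ y = fun a : {a // a ∈ π i0} => y (a : Fin n) := by
    intro y
    funext a
    simp [hJdef, Matrix.mulVec, dotProduct, Matrix.one_apply, ite_mul,
      Finset.sum_ite_eq]
  have hJt : ∀ (v : {a // a ∈ π i0} → ℝ) (z : Fin n → ℝ),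
      (Jᵀ *ᵥ v) ⬝ᵥ z = v ⬝ᵥ (J *ᵥ z) := by
    intro v z
    rw [Matrix.mulVec_transpose, ← Matrix.dotProduct_mulVec]
  have hJPJ : J * P * Jᵀ = A i0 := by
    ext a b
    simp [hJdef, hAdef, Matrix.mul_apply, Matrix.one_apply, ite_mul, mul_ite,
      Finset.sum_ite_eq, Finset.sum_ite_eq']
  set w : {a // a ∈ π i0} → ℝ := (A i0)⁻¹ *ᵥ gi i0 with hwdef
  have hAw : (A i0) *ᵥ w = gi i0 := by
    rw [hwdef, Matrix.mulVec_mulVec, Matrix.mul_nonsing_inv _ (hAdet i0), Matrix.one_mulVec]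
  have herr : x' - xopt = e - Jᵀ *ᵥ w := by
    rw [hx']
    have hneg : ((fun a : {a // a ∈ π i0} => q a.1) -
        P.submatrix (fun a : {a // a ∈ π i0} => (a : Fin n)) id *ᵥ x) = -(gi i0) := by
      rw [← hgi i0, neg_sub]
    have hAi0 : (P.submatrix (fun a : {a // a ∈ π i0} => (a : Fin n))
        (fun a : {a // a ∈ π i0} => (a : Fin n)))⁻¹ = (A i0)⁻¹ := rfl
    rw [hneg, hAi0, Matrix.mulVec_neg, Matrix.mulVec_neg, ← hwdef, he]
    funext b
    simp only [Pi.add_apply, Pi.sub_apply, Pi.neg_apply]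
    ring
  set u := Jᵀ *ᵥ w with hudef
  have hu_e : u ⬝ᵥ (P *ᵥ e) = w ⬝ᵥ gi i0 := by
    rw [hudef, hJt w (P *ᵥ e), ← hgdef, hJr g]
  have he_u : e ⬝ᵥ (P *ᵥ u) = w ⬝ᵥ gi i0 := by
    rw [dot_symm P hPsymm e u, dotProduct_comm]
    exact hu_e
  have hu_u : u ⬝ᵥ (P *ᵥ u) = w ⬝ᵥ gi i0 := by
    rw [hudef, hJt w (P *ᵥ (Jᵀ *ᵥ w)), Matrix.mulVec_mulVec, Matrix.mulVec_mulVec, hJPJ, hAw]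
  have hβw : β i0 = w ⬝ᵥ gi i0 := by
    rw [hβ' i0, dotProduct_comm]
  clear_value u w gi g e
  have hnum : (x' - xopt) ⬝ᵥ (P *ᵥ (x' - xopt)) = e ⬝ᵥ (P *ᵥ e) - β i0 := by
    rw [herr]
    have h1 : (e - u) ⬝ᵥ (P *ᵥ (e - u)) =
        e ⬝ᵥ (P *ᵥ e) - e ⬝ᵥ (P *ᵥ u) - (u ⬝ᵥ (P *ᵥ e) - u ⬝ᵥ (P *ᵥ u)) := by
      rw [Matrix.mulVec_sub, dotProduct_sub, sub_dotProduct, sub_dotProduct]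
      ring
    rw [h1, hu_e, he_u, hu_u, hβw]
    ring
  -- the stacked vectors
  set E : (Σ i : Fin m, {a // a ∈ π i}) → ℝ := fun p => e (p.2 : Fin n) with hEdef
  set G : (Σ i : Fin m, {a // a ∈ π i}) → ℝ := fun p => g (p.2 : Fin n) with hGdef
  have hPPeq : PPi = P.submatrix σf σf := by
    ext p p'
    rw [hPPi]
    rfl
  have hPPd : PPi.PosDef := by
    rw [hPPeq]
    exact posdef_submatrix hP σf hσinj
  have hPPt : PPiᵀ = PPi := by
    ext p p'
    have := congrFun (congrFun hPPd.1 p) p'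
    simpa using this
  have hG : PPi *ᵥ E = G := by
    funext p
    rw [hPPeq]
    simp only [Matrix.mulVec, dotProduct, Matrix.submatrix_apply, hEdef, hGdef]
    rw [Fintype.sum_bijective σf hσ _ (fun b => P (σf p) b * e b) (fun p' => rfl)]
    rw [hgdef]
    rfl
  have hEPE : E ⬝ᵥ (PPi *ᵥ E) = e ⬝ᵥ (P *ᵥ e) := by
    rw [hG]
    simp only [dotProduct, hEdef, hGdef]
    rw [Fintype.sum_bijective σf hσ _ (fun b => e b * g b) (fun p' => rfl)]
    rw [hgdef]
  -- block diagonal structure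
  have hBmul : ∀ (z : (Σ i : Fin m, {a // a ∈ π i}) → ℝ) (p : Σ i : Fin m, {a // a ∈ π i}),
      (BPi *ᵥ z) p = ((A p.1) *ᵥ fun a => z ⟨p.1, a⟩) p.2 := by
    intro z p
    obtain ⟨i, a⟩ := p
    simp only [Matrix.mulVec, dotProduct]
    rw [← Finset.univ_sigma_univ, Finset.sum_sigma]
    rw [Finset.sum_eq_single i]
    · simp only [hBPi]
      simp only [reduceIte]
      rfl
    · intro j _ hj
      apply Finset.sum_eq_zero
      intro b _
      rw [hBPi]
      simp [Ne.symm hj]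
    · simp
  have hBH : BPi.IsHermitian := by
    ext p p'
    rw [Matrix.conjTranspose_apply, hBPi, hBPi]
    by_cases h : p.1 = p'.1
    · rw [if_pos h.symm, if_pos h, star_trivial]
      exact hPentry _ _
    · rw [if_neg (Ne.symm h), if_neg h, star_trivial]
  have hBPd : BPi.PosDef := by
    refine .of_dotProduct_mulVec_pos hBH fun v hv => ?_
    have hcompute : v ⬝ᵥ (BPi *ᵥ v) =
        ∑ i, (fun a => v ⟨i, a⟩) ⬝ᵥ ((A i) *ᵥ fun a => v ⟨i, a⟩) := by
      simp only [dotProduct]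
      rw [← Finset.univ_sigma_univ, Finset.sum_sigma]
      congr 1
      funext i
      congr 1
      funext a
      rw [hBmul v ⟨i, a⟩]
    have hterm_nonneg : ∀ i, 0 ≤ (fun a => v ⟨i, a⟩) ⬝ᵥ ((A i) *ᵥ fun a => v ⟨i, a⟩) := by
      intro i
      have := (hA i).posSemidef.dotProduct_mulVec_nonneg (fun a => v ⟨i, a⟩)
      simpa using this
    obtain ⟨p0, hp0⟩ := Function.ne_iff.mp hv
    have hpos : 0 < (fun a => v ⟨p0.1, a⟩) ⬝ᵥ ((A p0.1) *ᵥ fun a => v ⟨p0.1, a⟩) := by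
      have hvne : (fun a => v ⟨p0.1, a⟩) ≠ 0 := by
        intro h0
        apply hp0
        have := congrFun h0 p0.2
        simpa using this
      have := (hA p0.1).dotProduct_mulVec_pos hvne
      simpa using this
    have : 0 < v ⬝ᵥ (BPi *ᵥ v) := by
      rw [hcompute]
      exact Finset.sum_pos' (fun i _ => hterm_nonneg i) ⟨p0.1, Finset.mem_univ _, hpos⟩
    simpa using this
  have hBdet : IsUnit BPi.det := hBPd.det_pos.ne'.isUnit
  set H : (Σ i : Fin m, {a // a ∈ π i}) → ℝ := fun p => ((A p.1)⁻¹ *ᵥ gi p.1) p.2 with hHdef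
  have hBHG : BPi *ᵥ H = G := by
    funext p
    rw [hBmul H p]
    have : (fun a => H ⟨p.1, a⟩) = (A p.1)⁻¹ *ᵥ gi p.1 := rfl
    rw [this, Matrix.mulVec_mulVec, Matrix.mul_nonsing_inv _ (hAdet p.1), Matrix.one_mulVec,
      hgidef]
  have hHG : BPi⁻¹ *ᵥ G = H := by
    rw [← hBHG, Matrix.mulVec_mulVec, Matrix.nonsing_inv_mul _ hBdet, Matrix.one_mulVec]
  have hGH : G ⬝ᵥ H = ∑ i, β i := by
    simp only [dotProduct, hGdef, hHdef]
    rw [← Finset.univ_sigma_univ, Finset.sum_sigma]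
    congr 1
    funext i
    rw [hβ' i, hgidef]
    rfl
  -- spectral bound
  have hkey := key_spectral PPi BPi hPPd hBPd μ hμmin E
  rw [hG, hHG, dot_symm PPi hPPt E H, hG, hGH] at hkey
  have hEG : E ⬝ᵥ G = e ⬝ᵥ (P *ᵥ e) := by rw [← hG]; exact hEPE
  rw [hEG] at hkey
  -- summation bound
  have hsum : ∑ i, β i ≤ m * β i0 := by
    calc ∑ i, β i ≤ ∑ _i : Fin m, β i0 := Finset.sum_le_sum fun i _ => hi0 i
      _ = m * β i0 := by simp [Finset.sum_const, nsmul_eq_mul]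
  have hmpos : (0 : ℝ) < m := by exact_mod_cast hm
  have hfinal : μ / m * (e ⬝ᵥ (P *ᵥ e)) ≤ β i0 := by
    rw [div_mul_eq_mul_div, div_le_iff₀ hmpos]
    calc μ * (e ⬝ᵥ (P *ᵥ e)) ≤ ∑ i, β i := hkey
      _ ≤ m * β i0 := hsum
      _ = β i0 * m := mul_comm _ _
  rw [hnum, hgdef, div_le_iff₀ hDpos]
  have expand : (1 - μ / ↑m) * (e ⬝ᵥ (P *ᵥ e)) =
      e ⬝ᵥ (P *ᵥ e) - μ / ↑m * (e ⬝ᵥ (P *ᵥ e)) := by ring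
  rw [expand]
  linarith
end
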